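/- Let $T>0$, $K_1\ge 0$, let $b:\mathbb{R}^d\to\mathbb{R}^d$ satisfy $|b(u)-b(v)|\le K_1|u-v|$ for all $u,v$, let $g:[0,T]\to\mathbb{R}^d$ be continuous with $g(0)=0$, and let $X:[0,T]\to\mathbb{R}^d$ be continuous with $X_t = x + \int_0^t b(X_s)\,ds + g(t)$ for all $t\in[0,T]$. Then for all $s,t\in[0,T]$, $|X_t - X_s| \le d_1|t-s| + d_2\|g\|_\infty|t-s| + |g(t)-g(s)|$, where $d_1 = K_1e^{K_1T}|x| + (1+K_1Te^{K_1T})(K_1|x|+|b(x)|)$ and $d_2 = K_1e^{K_1T}$. -/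

import Mathlib

open MeasureTheory Set

/-- The sup norm `‖f‖_∞ = sup_{0 ≤ t ≤ T} ‖f t‖` of a path on `[0,T]`. -/
noncomputable def supN {E : Type*} [NormedAddCommGroup E] (T : ℝ) (f : ℝ → E) : ℝ :=
  ⨆ t : Icc (0:ℝ) T, ‖f (t : ℝ)‖

/-- Modulus-of-continuity estimate (3.3):
`|X_t - X_s| ≤ d₁|t-s| + d₂‖g‖_∞|t-s| + |g(t)-g(s)|` with
`d₁ = K₁ e^{K₁T}|x| + (1+K₁T e^{K₁T})(K₁|x|+|b(x)|)` and `d₂ = K₁ e^{K₁T}`,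
for the solution of `X_t = x + ∫_0^t b(X_s) ds + g(t)`. -/
theorem stmt_2 {d : ℕ} (T : ℝ) (hT : 0 < T) (K₁ : ℝ) (hK₁ : 0 ≤ K₁)
    (b : EuclideanSpace ℝ (Fin d) → EuclideanSpace ℝ (Fin d))
    (hb : ∀ u v, ‖b u - b v‖ ≤ K₁ * ‖u - v‖)
    (g : ℝ → EuclideanSpace ℝ (Fin d))
    (hg : ContinuousOn g (Icc 0 T)) (hg0 : g 0 = 0)
    (x : EuclideanSpace ℝ (Fin d))
    (X : ℝ → EuclideanSpace ℝ (Fin d))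
    (hX : ContinuousOn X (Icc 0 T))
    (hXeq : ∀ t ∈ Icc (0:ℝ) T, X t = x + (∫ s in (0:ℝ)..t, b (X s)) + g t) :
    ∀ s ∈ Icc (0:ℝ) T, ∀ t ∈ Icc (0:ℝ) T,
      ‖X t - X s‖ ≤
        (K₁ * Real.exp (K₁ * T) * ‖x‖
            + (1 + K₁ * T * Real.exp (K₁ * T)) * (K₁ * ‖x‖ + ‖b x‖)) * |t - s|
        + (K₁ * Real.exp (K₁ * T)) * supN T g * |t - s|
        + ‖g t - g s‖ := by
  intro s hs t ht
  set E2 := Real.exp (K₁ * T) with hE2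
  -- clamp to [0,T]
  set proj : ℝ → ℝ := fun u => max 0 (min u T) with hproj
  have hprojc : Continuous proj := continuous_const.max (continuous_id.min continuous_const)
  have hprojmem : ∀ u, proj u ∈ Icc (0:ℝ) T := fun u =>
    ⟨le_max_left _ _, max_le hT.le (min_le_right _ _)⟩
  have hprojeq : ∀ u ∈ Icc (0:ℝ) T, proj u = u := by
    intro u hu
    simp [hproj, min_eq_left hu.2, max_eq_right hu.1]
  set Y : ℝ → EuclideanSpace ℝ (Fin d) := fun u => X (proj u) with hYdef
  have hYc : Continuous Y := hX.comp_continuous hprojc hprojmem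
  have hYeq : ∀ u ∈ Icc (0:ℝ) T, Y u = X u := by
    intro u hu; simp [hYdef, hprojeq u hu]
  -- b is continuous
  have hbl : LipschitzWith ⟨K₁, hK₁⟩ b :=
    LipschitzWith.of_dist_le_mul fun u v => by
      show dist (b u) (b v) ≤ K₁ * dist u v
      simpa [dist_eq_norm] using hb u v
  have hbc : Continuous b := hbl.continuous
  set B : ℝ → EuclideanSpace ℝ (Fin d) := fun u => b (Y u) with hBdef
  have hBc : Continuous B := hbc.comp hYc
  -- sup norm of g
  set G := supN T g with hGdef
  have hne : Nonempty (Icc (0:ℝ) T) := ⟨⟨0, le_refl _, hT.le⟩⟩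
  have hbdd : BddAbove (Set.range fun u : Icc (0:ℝ) T => ‖g u‖) := by
    have h := (isCompact_Icc.image_of_continuousOn hg.norm).bddAbove
    rw [Set.image_eq_range] at h
    exact h
  have hGle : ∀ u ∈ Icc (0:ℝ) T, ‖g u‖ ≤ G := fun u hu =>
    le_ciSup hbdd (⟨u, hu⟩ : Icc (0:ℝ) T)
  have hG0 : 0 ≤ G := by
    have := hGle 0 ⟨le_refl _, hT.le⟩
    simpa [hg0] using this
  set c₀ := ‖b x‖ + K₁ * ‖x‖ with hc₀
  have hc₀0 : 0 ≤ c₀ := by positivity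
  have hbnd : ∀ u : EuclideanSpace ℝ (Fin d), ‖b u‖ ≤ c₀ + K₁ * ‖u‖ := by
    intro u
    have h1 := hb u x
    have h2 := norm_sub_norm_le (b u) (b x)
    have h3 := norm_sub_le u x
    have h4 := mul_le_mul_of_nonneg_left h3 hK₁
    simp only [hc₀]
    nlinarith
  -- primitive of ‖Y‖
  set φ : ℝ → ℝ := fun r => ∫ u in (0:ℝ)..r, ‖Y u‖ with hφdef
  have hφderiv : ∀ r : ℝ, HasDerivAt φ ‖Y r‖ r := by
    intro r
    exact intervalIntegral.integral_hasDerivAt_right (hYc.norm.intervalIntegrable 0 r)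
      (hYc.norm.stronglyMeasurable.stronglyMeasurableAtFilter) hYc.norm.continuousAt
  have hφcont : Continuous φ :=
    continuous_iff_continuousAt.2 fun r => (hφderiv r).differentiableAt.continuousAt
  have hφnonneg : ∀ r, 0 ≤ r → 0 ≤ φ r := by
    intro r hr
    exact intervalIntegral.integral_nonneg hr fun u _ => norm_nonneg _
  set A := ‖x‖ + c₀ * T + G with hA
  have hA0 : 0 ≤ A := by positivity
  -- key integral inequality
  have hkey : ∀ r ∈ Icc (0:ℝ) T, ‖X r‖ ≤ A + K₁ * φ r := by
    intro r hr
    have hXr := hXeq r hr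
    have hcongr : (∫ u in (0:ℝ)..r, b (X u)) = ∫ u in (0:ℝ)..r, B u := by
      apply intervalIntegral.integral_congr
      intro u hu
      have hu' : u ∈ Icc (0:ℝ) T := by
        rcases hu with ⟨h1, h2⟩
        rw [min_eq_left hr.1] at h1
        rw [max_eq_right hr.1] at h2
        exact ⟨h1, h2.trans hr.2⟩
      simp [hBdef, hYeq u hu']
    have h1 : ‖X r‖ ≤ ‖x‖ + ‖∫ u in (0:ℝ)..r, B u‖ + ‖g r‖ := by
      rw [hXr, hcongr]; exact norm_add₃_le
    have h2 : ‖∫ u in (0:ℝ)..r, B u‖ ≤ ∫ u in (0:ℝ)..r, ‖B u‖ :=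
      intervalIntegral.norm_integral_le_integral_norm hr.1
    have h3 : (∫ u in (0:ℝ)..r, ‖B u‖) ≤ ∫ u in (0:ℝ)..r, (c₀ + K₁ * ‖Y u‖) := by
      apply intervalIntegral.integral_mono_on hr.1 (hBc.norm.intervalIntegrable 0 r)
        ((continuous_const.add (continuous_const.mul hYc.norm)).intervalIntegrable 0 r)
      intro u _
      exact hbnd (Y u)
    have h4 : (∫ u in (0:ℝ)..r, (c₀ + K₁ * ‖Y u‖)) = c₀ * r + K₁ * φ r := by
      rw [intervalIntegral.integral_add (f := fun _ => c₀) (g := fun u => K₁ * ‖Y u‖)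
        (intervalIntegrable_const)
        ((continuous_const.mul hYc.norm).intervalIntegrable 0 r),
        intervalIntegral.integral_const, intervalIntegral.integral_const_mul]
      simp [hφdef, mul_comm]
    have h5 : c₀ * r ≤ c₀ * T := mul_le_mul_of_nonneg_left hr.2 hc₀0
    have h6 := hGle r hr
    simp only [hA]
    linarith
  -- Gronwall
  have grw : ∀ r ∈ Icc (0:ℝ) T, ‖φ r‖ ≤ gronwallBound 0 K₁ A (r - 0) := by
    apply norm_le_gronwallBound_of_norm_deriv_right_le hφcont.continuousOn
      (fun r _ => (hφderiv r).hasDerivWithinAt)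
    · simp [hφdef]
    · intro r hr
      have hr' : r ∈ Icc (0:ℝ) T := ⟨hr.1, hr.2.le⟩
      have h1 : ‖Y r‖ = ‖X r‖ := by rw [hYeq r hr']
      have h2 := hkey r hr'
      have h3 : ‖φ r‖ = φ r := abs_of_nonneg (hφnonneg r hr.1)
      rw [Real.norm_eq_abs, Real.norm_eq_abs] at *
      rw [h3]
      calc |‖Y r‖| = ‖X r‖ := by rw [abs_of_nonneg (norm_nonneg _), h1]
        _ ≤ A + K₁ * φ r := h2
        _ = K₁ * φ r + A := by ring
  -- bound on ‖X r‖
  have hexp : ∀ r ∈ Icc (0:ℝ) T, A + K₁ * gronwallBound 0 K₁ A (r - 0) ≤ A * E2 := by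
    intro r hr
    by_cases hK : K₁ = 0
    · simp [hK, hE2, gronwallBound_K0]
    · have hKpos : 0 < K₁ := lt_of_le_of_ne hK₁ (Ne.symm hK)
      rw [gronwallBound_of_K_ne_0 hK]
      have hmono : Real.exp (K₁ * r) ≤ E2 := by
        rw [hE2]
        exact Real.exp_le_exp.2 (mul_le_mul_of_nonneg_left hr.2 hK₁)
      have : A + K₁ * (0 * Real.exp (K₁ * (r - 0)) + A / K₁ * (Real.exp (K₁ * (r - 0)) - 1))
          = A * Real.exp (K₁ * r) := by
        field_simp
        ring
      rw [this]
      exact mul_le_mul_of_nonneg_left hmono hA0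
  have hXbd : ∀ r ∈ Icc (0:ℝ) T, ‖X r‖ ≤ A * E2 := by
    intro r hr
    have h1 := hkey r hr
    have h2 := grw r hr
    have h3 : φ r ≤ gronwallBound 0 K₁ A (r - 0) := le_trans (le_abs_self _) h2
    have h4 := mul_le_mul_of_nonneg_left h3 hK₁
    have h5 := hexp r hr
    linarith
  -- bound on ‖b (X u)‖
  set M := c₀ + K₁ * (A * E2) with hM
  have hbXbd : ∀ u ∈ Icc (0:ℝ) T, ‖b (X u)‖ ≤ M := by
    intro u hu
    have h1 := hbnd (X u)
    have h2 := mul_le_mul_of_nonneg_left (hXbd u hu) hK₁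
    simp only [hM]
    linarith
  -- main computation
  have hsubI : Set.uIoc s t ⊆ Icc (0:ℝ) T := by
    intro u hu
    rcases hu with ⟨h1, h2⟩
    exact ⟨le_trans (le_min hs.1 ht.1) h1.le, le_trans h2 (max_le hs.2 ht.2)⟩
  have hcongr : ∀ r ∈ Icc (0:ℝ) T, (∫ u in (0:ℝ)..r, b (X u)) = ∫ u in (0:ℝ)..r, B u := by
    intro r hr
    apply intervalIntegral.integral_congr
    intro u hu
    have hu' : u ∈ Icc (0:ℝ) T := by
      rcases hu with ⟨h1, h2⟩
      rw [min_eq_left hr.1] at h1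
      rw [max_eq_right hr.1] at h2
      exact ⟨h1, h2.trans hr.2⟩
    simp [hBdef, hYeq u hu']
  have hdiff : X t - X s = (∫ u in s..t, B u) + (g t - g s) := by
    rw [hXeq t ht, hXeq s hs, hcongr t ht, hcongr s hs,
      ← intervalIntegral.integral_interval_sub_left (hBc.intervalIntegrable 0 t)
        (hBc.intervalIntegrable 0 s)]
    abel
  have hnormint : ‖∫ u in s..t, B u‖ ≤ M * |t - s| := by
    apply intervalIntegral.norm_integral_le_of_norm_le_const
    intro u hu
    have hu' := hsubI hu
    have : B u = b (X u) := by simp [hBdef, hYeq u hu']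
    rw [this]
    exact hbXbd u hu'
  have hfinal : ‖X t - X s‖ ≤ M * |t - s| + ‖g t - g s‖ := by
    rw [hdiff]
    exact le_trans (norm_add_le _ _) (by linarith [hnormint])
  have hMeq : M = (K₁ * E2 * ‖x‖ + (1 + K₁ * T * E2) * (K₁ * ‖x‖ + ‖b x‖))
      + (K₁ * E2) * G := by
    simp only [hM, hA, hc₀]
    ring
  calc ‖X t - X s‖ ≤ M * |t - s| + ‖g t - g s‖ := hfinal
    _ = (K₁ * E2 * ‖x‖ + (1 + K₁ * T * E2) * (K₁ * ‖x‖ + ‖b x‖)) * |t - s|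
        + (K₁ * E2) * G * |t - s| + ‖g t - g s‖ := by rw [hMeq]; ring
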